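/- Let ζ = e^{πi/8} and ζ' = e^{3πi/8}, and let M = diag(1, ζ, −1, 1, ζ, −1, 1, ζ, −1, ζ) and M' = diag(1, ζ', −1, 1, ζ', −1, 1, ζ', −1, ζ') be 10×10 complex diagonal matrices. For every positive integer m with m ≡ 2 (mod 4), one has |Tr(M^m)| ≠ |Tr((M')^m)|. -/

import Mathlib

open Matrix Complex

noncomputable def zetaI : ℂ := Complex.exp (Real.pi * Complex.I / 8)

noncomputable def zetaS : ℂ := Complex.exp (3 * Real.pi * Complex.I / 8)

noncomputable def Mgenus2 : Matrix (Fin 10) (Fin 10) ℂ :=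
  Matrix.diagonal ![1, zetaI, -1, 1, zetaI, -1, 1, zetaI, -1, zetaI]

noncomputable def Mgenus2' : Matrix (Fin 10) (Fin 10) ℂ :=
  Matrix.diagonal ![1, zetaS, -1, 1, zetaS, -1, 1, zetaS, -1, zetaS]

lemma trace_diag_pow (z : ℂ) (m : ℕ) (hm : m % 2 = 0) :
    Matrix.trace ((Matrix.diagonal ![1, z, -1, 1, z, -1, 1, z, -1, z] :
      Matrix (Fin 10) (Fin 10) ℂ) ^ m) = 6 + 4 * z ^ m := by
  rw [Matrix.diagonal_pow, Matrix.trace_diagonal]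
  have h1 : (-1 : ℂ) ^ m = 1 := Even.neg_one_pow (Nat.even_iff.2 hm)
  simp [Fin.sum_univ_succ, h1]
  ring

lemma normSq_six_add (θ : ℝ) :
    Complex.normSq (6 + 4 * Complex.exp (θ * Complex.I)) = 52 + 48 * Real.cos θ := by
  simp [Complex.normSq_apply, Complex.exp_ofReal_mul_I_re, Complex.exp_ofReal_mul_I_im]
  nlinarith [Real.sin_sq_add_cos_sq θ]

theorem abs_trace_genus2_ne (m : ℕ) (hm : 0 < m) (hmod : m % 4 = 2) :
    ‖Matrix.trace (Mgenus2 ^ m)‖ ≠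
      ‖Matrix.trace (Mgenus2' ^ m)‖ := by
  obtain ⟨k, hk⟩ : ∃ k, m = 4 * k + 2 := ⟨m / 4, by omega⟩
  have hm2 : m % 2 = 0 := by omega
  set θ : ℝ := m * Real.pi / 8 with hθ
  have hz1 : zetaI ^ m = Complex.exp ((θ : ℂ) * Complex.I) := by
    rw [zetaI, ← Complex.exp_nat_mul]
    congr 1
    rw [hθ]
    push_cast
    ring
  have hz2 : zetaS ^ m = Complex.exp (((3 * θ : ℝ) : ℂ) * Complex.I) := by
    rw [zetaS, ← Complex.exp_nat_mul]
    congr 1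
    rw [hθ]
    push_cast
    ring
  have hc2 : Real.cos (2 * θ) = 0 := by
    have h2θ : 2 * θ = k * Real.pi + Real.pi / 2 := by
      rw [hθ, hk]; push_cast; ring
    rw [h2θ, Real.cos_add, Real.cos_pi_div_two, Real.sin_pi_div_two,
      Real.sin_nat_mul_pi]
    ring
  have h3 : Real.cos (3 * θ) = - Real.cos θ := by
    have e1 : Real.cos (3 * θ) =
        Real.cos (2 * θ) * Real.cos θ - Real.sin (2 * θ) * Real.sin θ := by
      rw [← Real.cos_add]; ring_nf
    have e2 : Real.cos θ =
        Real.cos (2 * θ) * Real.cos θ + Real.sin (2 * θ) * Real.sin θ := by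
      rw [← Real.cos_sub]; ring_nf
    rw [hc2] at e1 e2
    linarith
  have hcne : Real.cos θ ≠ 0 := by
    intro h
    have h2 := Real.cos_two_mul θ
    rw [hc2, h] at h2
    norm_num at h2
  intro habs
  rw [Mgenus2, Mgenus2', trace_diag_pow _ _ hm2, trace_diag_pow _ _ hm2,
    hz1, hz2] at habs
  have hns : Complex.normSq (6 + 4 * Complex.exp ((θ : ℂ) * Complex.I)) =
      Complex.normSq (6 + 4 * Complex.exp (((3 * θ : ℝ) : ℂ) * Complex.I)) := by
    rw [← Complex.sq_norm, ← Complex.sq_norm, habs]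
  rw [normSq_six_add, normSq_six_add, h3] at hns
  have : Real.cos θ = 0 := by linarith
  exact hcne this
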